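/- Let Z be a {0,1}-valued random variable and suppose the family consisting of the {0,1}-valued potential mediators (M_{d,z})_{d,z∈{0,1}} and the integrable potential outcomes Y_{0,0}, Y_{0,1} is independent of Z. If P(M_{1,z} ≥ M_{0,z}) = 1 for z = 0,1 (weak monotonicity of the mediator in the treatment), then E[Y_{0,M_{1,Z}} − Y_{0,M_{0,Z}}] = Σ_{z∈{0,1}} E[(Y_{0,1} − Y_{0,0})·1{M_{1,z} > M_{0,z}}]·P(Z=z). -/

import Mathlib

open MeasureTheory ProbabilityTheory

/-- Conditional mean `E[W | A] = E[W·1_A] / P(A)` (set integral divided by probability). -/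
noncomputable def condMean {Ω : Type*} [MeasurableSpace Ω] (P : Measure Ω)
    (W : Ω → ℝ) (A : Set Ω) : ℝ :=
  (∫ ω in A, W ω ∂P) / (P A).toReal

/-- A `{0,1}`-valued (Bool-coded) random variable, viewed as a real number. -/
noncomputable def bR (b : Bool) : ℝ := if b then 1 else 0

section Aux

variable {Ω : Type*} {mΩ : MeasurableSpace Ω}

/-- The σ-algebra generated by the potential mediators and outcomes. -/
def bigSigma (M : Bool → Bool → Ω → Bool) (Y0 : Bool → Ω → ℝ) : MeasurableSpace Ω :=
  (⨆ (d : Bool) (z : Bool), MeasurableSpace.comap (M d z) inferInstance)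
    ⊔ (⨆ (m : Bool), MeasurableSpace.comap (Y0 m) inferInstance)

lemma comp_eq_indicator (N : Ω → Bool) (Y0 : Bool → Ω → ℝ) :
    (fun ω => Y0 (N ω) ω)
      = (N ⁻¹' {true}).indicator (Y0 true) + ((N ⁻¹' {true})ᶜ).indicator (Y0 false) := by
  funext ω
  by_cases h : N ω = true <;>
    simp [Set.indicator_apply, Set.mem_preimage, h]

lemma integrable_comp' (P : @Measure Ω mΩ) (N : Ω → Bool) (hN : @Measurable Ω Bool mΩ _ N)
    (Y0 : Bool → Ω → ℝ) (hY : ∀ m, Integrable (Y0 m) P) :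
    Integrable (fun ω => Y0 (N ω) ω) P := by
  rw [comp_eq_indicator]
  exact ((hY true).indicator (hN (measurableSet_singleton true))).add
    ((hY false).indicator (hN (measurableSet_singleton true)).compl)

lemma measurable_comp_m {m : MeasurableSpace Ω} (N : Ω → Bool) (hN : Measurable[m] N)
    (Y0 : Bool → Ω → ℝ) (hY : ∀ b, Measurable[m] (Y0 b)) :
    Measurable[m] (fun ω => Y0 (N ω) ω) := by
  rw [comp_eq_indicator]
  exact ((hY true).indicator (hN (measurableSet_singleton true))).add
    ((hY false).indicator (hN (measurableSet_singleton true)).compl)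

lemma measurable_MZ (Z : Ω → Bool) (hZ : @Measurable Ω Bool mΩ _ Z) (M : Bool → Ω → Bool)
    (hM : ∀ z, @Measurable Ω Bool mΩ _ (M z)) :
    @Measurable Ω Bool mΩ _ (fun ω => M (Z ω) ω) := by
  have h : (fun ω => M (Z ω) ω) = fun ω => if Z ω = true then M true ω else M false ω := by
    funext ω; by_cases h : Z ω = true <;> simp [h]
  rw [h]
  exact Measurable.ite (hZ (measurableSet_singleton true)) (hM true) (hM false)

lemma indep_mono' {m1 m1' m2 : MeasurableSpace Ω} {P : @Measure Ω mΩ}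
    (h : Indep m1 m2 P) (h1 : m1' ≤ m1) : Indep m1' m2 P := by
  rw [Indep_iff] at h ⊢
  exact fun t1 t2 ht1 ht2 => h t1 t2 (h1 _ ht1) ht2

end Aux

/-- under independence of the potential variables from `Z` and weak
monotonicity of the mediator in the treatment (`P(M_{1,z} ≥ M_{0,z}) = 1`), the natural
indirect effect is a `P(Z=z)`-weighted sum of complier average mediator effects. -/
theorem stmt_16 {Ω : Type*} [MeasurableSpace Ω] (P : Measure Ω) [IsProbabilityMeasure P]
    (Z : Ω → Bool) (M : Bool → Bool → Ω → Bool) (Y0 : Bool → Ω → ℝ)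
    (hZ : Measurable Z) (hM : ∀ d z, Measurable (M d z))
    (hY : ∀ m, Integrable (Y0 m) P)
    (hIndep : Indep
      ((⨆ (d : Bool) (z : Bool), MeasurableSpace.comap (M d z) inferInstance)
        ⊔ (⨆ (m : Bool), MeasurableSpace.comap (Y0 m) inferInstance))
      (MeasurableSpace.comap Z inferInstance) P)
    (hmono : ∀ z : Bool, P {ω | M false z ω ≤ M true z ω} = 1) :
    ∫ ω, (Y0 (M true (Z ω) ω) ω - Y0 (M false (Z ω) ω) ω) ∂P
      = ∑ z : Bool,
          (∫ ω in {ω | M false z ω < M true z ω}, (Y0 true ω - Y0 false ω) ∂P)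
            * (P {ω | Z ω = z}).toReal := by
  classical
  have hIndep' : Indep (bigSigma M Y0) (MeasurableSpace.comap Z inferInstance) P := hIndep
  -- the per-z integrand
  set W : Bool → Ω → ℝ := fun z ω => Y0 (M true z ω) ω - Y0 (M false z ω) ω with hW
  -- measurability of M d z and Y0 m w.r.t. bigSigma
  have hMm1 : ∀ d z, Measurable[bigSigma M Y0] (M d z) := fun d z => by
    rw [measurable_iff_comap_le]
    exact le_trans (le_iSup₂ (f := fun d z => MeasurableSpace.comap (M d z) inferInstance) d z)
      le_sup_left
  have hYm1 : ∀ m, Measurable[bigSigma M Y0] (Y0 m) := fun m => by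
    rw [measurable_iff_comap_le]
    exact le_trans (le_iSup_of_le m le_rfl) le_sup_right
  have hWm1 : ∀ z, Measurable[bigSigma M Y0] (W z) := fun z =>
    (measurable_comp_m _ (hMm1 true z) _ hYm1).sub
      (measurable_comp_m _ (hMm1 false z) _ hYm1)
  -- integrability of W z
  have hWint : ∀ z, Integrable (W z) P := fun z =>
    (integrable_comp' P _ (hM true z) _ hY).sub (integrable_comp' P _ (hM false z) _ hY)
  -- IndepFun (W z) Z
  have hWZ : ∀ z, IndepFun (W z) Z P := fun z =>
    (IndepFun_iff_Indep _ _ _).mpr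
      (indep_mono' hIndep' (measurable_iff_comap_le.mp (hWm1 z)))
  -- key: set integral over {Z = z} equals total integral times P(Z = z)
  have key : ∀ z : Bool,
      ∫ ω in Z ⁻¹' {z}, W z ω ∂P = (∫ ω, W z ω ∂P) * (P {ω | Z ω = z}).toReal := by
    intro z
    set φ : Bool → ℝ := fun b => if b = z then 1 else 0 with hφ
    have hφm : Measurable φ := measurable_from_top
    have hind : IndepFun (W z) (φ ∘ Z) P := (hWZ z).comp measurable_id hφm
    have hφind : φ ∘ Z = (Z ⁻¹' {z}).indicator (fun _ => (1:ℝ)) := by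
      funext ω
      by_cases h : Z ω = z <;> simp [hφ, Set.indicator_apply, h]
    have hφint : Integrable (φ ∘ Z) P := by
      rw [hφind]
      exact (integrable_const (1:ℝ)).indicator (hZ (measurableSet_singleton z))
    have hmul := hind.integral_mul_eq_mul_integral (hWint z).aestronglyMeasurable hφint.aestronglyMeasurable
    have h1 : (W z) * (φ ∘ Z) = (Z ⁻¹' {z}).indicator (W z) := by
      funext ω
      by_cases h : Z ω = z <;> simp [hφ, Set.indicator_apply, h]
    have h2 : ∫ ω, (φ ∘ Z) ω ∂P = (P {ω | Z ω = z}).toReal := by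
      rw [hφind, integral_indicator (hZ (measurableSet_singleton z)), setIntegral_const]
      simp only [smul_eq_mul, mul_one]
      rfl
    calc ∫ ω in Z ⁻¹' {z}, W z ω ∂P
        = ∫ ω, (Z ⁻¹' {z}).indicator (W z) ω ∂P :=
          (integral_indicator (hZ (measurableSet_singleton z))).symm
      _ = ∫ ω, ((W z) * (φ ∘ Z)) ω ∂P := by rw [h1]
      _ = (∫ ω, W z ω ∂P) * ∫ ω, (φ ∘ Z) ω ∂P := hmul
      _ = (∫ ω, W z ω ∂P) * (P {ω | Z ω = z}).toReal := by rw [h2]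
  -- monotonicity: total integral of W z equals complier set integral
  have hC : ∀ z : Bool, MeasurableSet {ω | M false z ω < M true z ω} := by
    intro z
    have h : {ω | M false z ω < M true z ω}
        = (M false z ⁻¹' {false}) ∩ (M true z ⁻¹' {true}) := by
      ext ω
      simp [Set.mem_setOf_eq, Bool.lt_iff, Set.mem_preimage]
    rw [h]
    exact ((hM false z) (measurableSet_singleton false)).inter
      ((hM true z) (measurableSet_singleton true))
  have hWC : ∀ z : Bool,
      ∫ ω, W z ω ∂P = ∫ ω in {ω | M false z ω < M true z ω}, (Y0 true ω - Y0 false ω) ∂P := by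
    intro z
    have hae : ∀ᵐ ω ∂P, M false z ω ≤ M true z ω := by
      rw [ae_iff]
      have hms : MeasurableSet {ω | M false z ω ≤ M true z ω} := by
        have h : {ω | M false z ω ≤ M true z ω}
            = (M false z ⁻¹' {false}) ∪ (M true z ⁻¹' {true}) := by
          ext ω
          rcases Bool.eq_false_or_eq_true (M false z ω) with h | h <;>
            rcases Bool.eq_false_or_eq_true (M true z ω) with h' | h' <;>
              simp [h, h']
        rw [h]
        exact ((hM false z) (measurableSet_singleton false)).union
          ((hM true z) (measurableSet_singleton true))
      have hcompl : {ω | ¬ M false z ω ≤ M true z ω} = {ω | M false z ω ≤ M true z ω}ᶜ := rfl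
      rw [hcompl, measure_compl hms (measure_ne_top P _), measure_univ, hmono z, tsub_self]
    have haeeq : W z =ᵐ[P]
        fun ω => {ω | M false z ω < M true z ω}.indicator
          (fun ω => Y0 true ω - Y0 false ω) ω := by
      filter_upwards [hae] with ω hω
      cases h : M false z ω <;> cases h' : M true z ω
      · simp [hW, Set.indicator_apply, Set.mem_setOf_eq, h, h', Bool.lt_iff]
      · simp [hW, Set.indicator_apply, Set.mem_setOf_eq, h, h', Bool.lt_iff]
      · rw [h, h'] at hω; exact absurd hω (by decide)
      · simp [hW, Set.indicator_apply, Set.mem_setOf_eq, h, h', Bool.lt_iff]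
    rw [integral_congr_ae haeeq, integral_indicator (hC z)]
  -- assemble
  have hsplit :
      ∫ ω, (Y0 (M true (Z ω) ω) ω - Y0 (M false (Z ω) ω) ω) ∂P
        = (∫ ω in Z ⁻¹' {true}, W true ω ∂P) + ∫ ω in Z ⁻¹' {false}, W false ω ∂P := by
    have hint : Integrable (fun ω => Y0 (M true (Z ω) ω) ω - Y0 (M false (Z ω) ω) ω) P :=
      (integrable_comp' P _ (measurable_MZ Z hZ _ (hM true)) _ hY).sub
        (integrable_comp' P _ (measurable_MZ Z hZ _ (hM false)) _ hY)
    have hs : MeasurableSet (Z ⁻¹' {true}) := hZ (measurableSet_singleton true)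
    have hcompl : (Z ⁻¹' {true})ᶜ = Z ⁻¹' {false} := by
      ext ω
      rcases Bool.eq_false_or_eq_true (Z ω) with h | h <;> simp [h]
    rw [← integral_add_compl hs hint, hcompl]
    congr 1
    · refine setIntegral_congr_fun hs fun ω hω => ?_
      have h : Z ω = true := hω
      rw [h]
    · refine setIntegral_congr_fun (hZ (measurableSet_singleton false)) fun ω hω => ?_
      have h : Z ω = false := hω
      rw [h]
  rw [hsplit, key true, key false, hWC true, hWC false, Fintype.sum_bool]
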